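/- For any finite set Γ of propositional formulas and any probability distribution P on formulas (a function assigning 0 to ⊥, satisfying P(¬φ) = 1 − P(φ), and finitely additive over classically inconsistent disjuncts), there exists a finite probabilistic model (a finite set W of worlds, a classical valuation of atoms at each world, and a probability measure on subsets of W) such that the induced probability of every γ ∈ Γ equals P(γ). -/

import Mathlib

/-- Propositional formulas: atoms, negation, disjunction. -/
inductive Fml : Type
  | atom : ℕ → Fml
  | neg : Fml → Fml
  | or : Fml → Fml → Fml
deriving DecidableEq

namespace Fml

def and (φ ψ : Fml) : Fml := neg (or (neg φ) (neg ψ))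

def bot : Fml := and (atom 0) (neg (atom 0))

def imp (φ ψ : Fml) : Fml := or (neg φ) ψ

def eval (v : ℕ → Bool) : Fml → Bool
  | atom n => v n
  | neg φ => !(eval v φ)
  | or φ ψ => (eval v φ) || (eval v ψ)

end Fml

/-- Two formulas are jointly classically unsatisfiable. -/
def Incompatible (φ ψ : Fml) : Prop :=
  ∀ v : ℕ → Bool, ¬(φ.eval v = true ∧ ψ.eval v = true)

/-- Classical (Set-Set) validity. -/
def ClValid (Γ Δ : Finset Fml) : Prop :=
  ∀ v : ℕ → Bool, (∀ γ ∈ Γ, γ.eval v = true) → ∃ δ ∈ Δ, δ.eval v = true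

/-- Classical single-conclusion entailment. -/
def ClEntails (Γ : Finset Fml) (φ : Fml) : Prop :=
  ∀ v : ℕ → Bool, (∀ γ ∈ Γ, γ.eval v = true) → φ.eval v = true

def ClConsistent (Γ : Finset Fml) : Prop :=
  ∃ v : ℕ → Bool, ∀ γ ∈ Γ, γ.eval v = true

def Tautology (φ : Fml) : Prop := ∀ v : ℕ → Bool, φ.eval v = true

/-- A probability distribution on formulas. -/
structure ProbDist where
  p : Fml → ℝ
  nonneg : ∀ φ, 0 ≤ p φ
  le_one : ∀ φ, p φ ≤ 1
  bot_eq : p Fml.bot = 0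
  neg_eq : ∀ φ, p (Fml.neg φ) = 1 - p φ
  add_eq : ∀ φ ψ, Incompatible φ ψ → p (Fml.or φ ψ) = p φ + p ψ

/-- A probabilistic model: worlds with classical valuations and a finitely
additive probability measure on subsets of worlds. -/
structure PModel where
  W : Type
  nonempty : Nonempty W
  val : W → ℕ → Bool
  μ : Set W → ℝ
  nonneg : ∀ A : Set W, 0 ≤ μ A
  empty_eq : μ (∅ : Set W) = 0
  univ_eq : μ (Set.univ : Set W) = 1
  add_eq : ∀ A B : Set W, Disjoint A B → μ (A ∪ B) = μ A + μ B

/-- Denotation of a formula in a model. -/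
def PModel.den (M : PModel) (φ : Fml) : Set M.W := {w | φ.eval (M.val w) = true}

/-- Induced probability of a formula in a model. -/
def PModel.prob (M : PModel) (φ : Fml) : ℝ := M.μ (M.den φ)

/-- An upset of [0,1]: contains 1, excludes 0, upward closed within [0,1]. -/
def IsUpset (α : Set ℝ) : Prop :=
  α ⊆ Set.Icc 0 1 ∧ (1 : ℝ) ∈ α ∧ (0 : ℝ) ∉ α ∧
    ∀ x ∈ α, ∀ y ∈ Set.Icc (0:ℝ) 1, x ≤ y → y ∈ α

/-- The mirror image of α. -/
def mirror (α : Set ℝ) : Set ℝ := {x ∈ Set.Icc (0:ℝ) 1 | 1 - x ∈ α}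

/-- The dual of α. -/
def dual (α : Set ℝ) : Set ℝ := Set.Icc (0:ℝ) 1 \ mirror α

/-- Conjunction of a finite set of formulas. -/
noncomputable def conj (Γ : Finset Fml) : Fml := Γ.toList.foldr Fml.and (Fml.neg Fml.bot)

/-- Disjunction of a finite set of formulas. -/
noncomputable def disj (Δ : Finset Fml) : Fml := Δ.toList.foldr Fml.or Fml.bot

/-- Disjunction of a list of formulas. -/
def disjList (l : List Fml) : Fml := l.foldr Fml.or Fml.bot

/-- α-preservation validity (over probability distributions). -/
def PresValid (α : Set ℝ) (Γ Δ : Finset Fml) : Prop :=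
  ∀ P : ProbDist, (∀ γ ∈ Γ, P.p γ ∈ α) → ∃ δ ∈ Δ, P.p δ ∈ α

/-- α-preservation validity (over probabilistic models). -/
def PresValidM (α : Set ℝ) (Γ Δ : Finset Fml) : Prop :=
  ∀ M : PModel, (∀ γ ∈ Γ, M.prob γ ∈ α) → ∃ δ ∈ Δ, M.prob δ ∈ α

/-- α-symmetric validity. -/
def SymValid (α : Set ℝ) (Γ Δ : Finset Fml) : Prop :=
  ∀ P : ProbDist, (∀ γ ∈ Γ, P.p γ ∈ α) → ∃ δ ∈ Δ, P.p δ ∉ mirror α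

/-- α-satisfiability of a finite set of formulas. -/
def Satis (α : Set ℝ) (Γ : Finset Fml) : Prop :=
  ∃ P : ProbDist, ∀ γ ∈ Γ, P.p γ ∈ α


namespace Stmt0Aux

lemma eval_bot (v : ℕ → Bool) : Fml.bot.eval v = false := by
  simp [Fml.bot, Fml.and, Fml.eval]

lemma eval_and (φ ψ : Fml) (v : ℕ → Bool) :
    (Fml.and φ ψ).eval v = (φ.eval v && ψ.eval v) := by
  simp [Fml.and, Fml.eval]

lemma P_mono (P : ProbDist) (φ ψ : Fml)
    (h : ∀ v, φ.eval v = true → ψ.eval v = true) : P.p φ ≤ P.p ψ := by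
  have hinc : Incompatible φ (Fml.neg ψ) := by
    rintro v ⟨h1, h2⟩
    simp only [Fml.eval, Bool.not_eq_true'] at h2
    rw [h v h1] at h2
    exact Bool.true_eq_false.mp h2
  have hadd := P.add_eq φ (Fml.neg ψ) hinc
  have h1 := P.le_one (Fml.or φ (Fml.neg ψ))
  rw [hadd, P.neg_eq] at h1
  linarith

lemma P_congr (P : ProbDist) (φ ψ : Fml) (h : ∀ v, φ.eval v = ψ.eval v) :
    P.p φ = P.p ψ :=
  le_antisymm (P_mono P φ ψ fun v hv => (h v) ▸ hv)
    (P_mono P ψ φ fun v hv => (h v).symm ▸ hv)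

lemma P_unsat (P : ProbDist) (ψ : Fml) (h : ∀ v, ψ.eval v = false) : P.p ψ = 0 := by
  have hinc : Incompatible ψ ψ := by
    rintro v ⟨h1, _⟩; rw [h v] at h1; exact Bool.false_ne_true h1
  have h2 := P.add_eq ψ ψ hinc
  have h3 : P.p (Fml.or ψ ψ) = P.p ψ :=
    P_congr P _ _ (fun v => by simp [Fml.eval])
  linarith

lemma P_taut (P : ProbDist) (φ : Fml) (h : ∀ v, φ.eval v = true) : P.p φ = 1 := by
  have h1 : P.p (Fml.neg φ) = 0 :=
    P_unsat P _ (fun v => by simp [Fml.eval, h v])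
  have h2 := P.neg_eq φ
  linarith

lemma eval_disjList (l : List Fml) (v : ℕ → Bool) :
    (disjList l).eval v = l.any (fun ψ => ψ.eval v) := by
  induction l with
  | nil => simp [disjList, eval_bot]
  | cons φ l ih => simp [disjList, Fml.eval] at ih ⊢; rw [ih]

lemma P_disjList (P : ProbDist) (l : List Fml) (h : l.Pairwise Incompatible) :
    P.p (disjList l) = (l.map P.p).sum := by
  induction l with
  | nil => simpa [disjList] using P_unsat P Fml.bot eval_bot
  | cons φ l ih =>
    rcases List.pairwise_cons.mp h with ⟨hφ, hl⟩
    have hinc : Incompatible φ (disjList l) := by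
      rintro v ⟨h1, h2⟩
      rw [eval_disjList] at h2
      rcases List.any_eq_true.mp h2 with ⟨ψ, hψ, hev⟩
      exact hφ ψ hψ v ⟨h1, hev⟩
    have : disjList (φ :: l) = Fml.or φ (disjList l) := rfl
    rw [this, P.add_eq _ _ hinc, ih hl]
    simp

/-- Maximal atom index + 1 occurring in a formula. -/
def maxAtom : Fml → ℕ
  | Fml.atom n => n + 1
  | Fml.neg φ => maxAtom φ
  | Fml.or φ ψ => max (maxAtom φ) (maxAtom ψ)

lemma eval_eq_of_agree (φ : Fml) (v w : ℕ → Bool)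
    (h : ∀ n < maxAtom φ, v n = w n) : φ.eval v = φ.eval w := by
  induction φ with
  | atom n => exact h n (Nat.lt_succ_self n)
  | neg φ ih => simp only [Fml.eval]; rw [ih h]
  | or φ ψ ih1 ih2 =>
    simp only [Fml.eval]
    rw [ih1 (fun n hn => h n (lt_of_lt_of_le hn (le_max_left _ _))),
        ih2 (fun n hn => h n (lt_of_lt_of_le hn (le_max_right _ _)))]

def conjList (l : List Fml) : Fml := l.foldr Fml.and (Fml.neg Fml.bot)

lemma eval_conjList (l : List Fml) (v : ℕ → Bool) :
    (conjList l).eval v = l.all (fun ψ => ψ.eval v) := by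
  induction l with
  | nil => simp [conjList, Fml.eval, eval_bot]
  | cons φ l ih => simp [conjList, eval_and] at ih ⊢; rw [ih]

variable (N : ℕ)

def litt (w : Fin N → Bool) (j : Fin N) : Fml :=
  if w j then Fml.atom j else Fml.neg (Fml.atom j)

def state (w : Fin N → Bool) : Fml := conjList ((List.finRange N).map (litt N w))

def vext (w : Fin N → Bool) : ℕ → Bool := fun n => if h : n < N then w ⟨n, h⟩ else false

def restr (v : ℕ → Bool) : Fin N → Bool := fun j => v j

lemma eval_state (w : Fin N → Bool) (v : ℕ → Bool) :
    (state N w).eval v = true ↔ restr N v = w := by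
  rw [state, eval_conjList, List.all_eq_true]
  constructor
  · intro h
    funext j
    have := h _ (List.mem_map_of_mem (f := litt N w) (List.mem_finRange j))
    by_cases hw : w j
    · simpa [litt, hw, restr, Fml.eval] using this
    · simp only [litt, hw, if_false, Fml.eval, Bool.not_eq_true',
        Bool.not_eq_true, eq_self_iff_true] at this
      simp only [Bool.not_eq_true] at hw
      simp only [restr]; rw [hw]; simpa [Fml.eval] using this
  · intro h ψ hψ
    rcases List.mem_map.mp hψ with ⟨j, _, rfl⟩
    have hv : v j = w j := congrFun h j
    by_cases hw : w j
    · simp [litt, hw, Fml.eval, hv]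
    · simp only [Bool.not_eq_true] at hw
      simp [litt, hw, Fml.eval, hv]

lemma restr_vext (w : Fin N → Bool) : restr N (vext N w) = w := by
  funext j
  simp [restr, vext, j.isLt]

lemma state_incomp {w w' : Fin N → Bool} (h : w ≠ w') :
    Incompatible (state N w) (state N w') := by
  rintro v ⟨h1, h2⟩
  rw [eval_state] at h1 h2
  exact h (h1 ▸ h2)

/-- Disjunction of the states of a finite set of worlds. -/
noncomputable def stF (S : Finset (Fin N → Bool)) : Fml :=
  disjList (S.toList.map (state N))

lemma eval_stF (S : Finset (Fin N → Bool)) (v : ℕ → Bool) :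
    (stF N S).eval v = true ↔ restr N v ∈ S := by
  rw [stF, eval_disjList, List.any_eq_true]
  constructor
  · rintro ⟨ψ, hψ, hev⟩
    rcases List.mem_map.mp hψ with ⟨w, hw, rfl⟩
    rw [eval_state] at hev
    rw [hev]
    exact Finset.mem_toList.mp hw
  · intro h
    exact ⟨state N (restr N v), List.mem_map_of_mem (Finset.mem_toList.mpr h),
      (eval_state N _ v).mpr rfl⟩

lemma P_stF (P : ProbDist) (S : Finset (Fin N → Bool)) :
    P.p (stF N S) = ∑ w ∈ S, P.p (state N w) := by
  have hpw : (S.toList.map (state N)).Pairwise Incompatible := by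
    apply List.Pairwise.map (state N) (fun a b hab => state_incomp N hab)
    exact S.nodup_toList
  rw [stF, P_disjList P _ hpw, List.map_map]
  rw [← Finset.sum_map_toList]
  rfl

end Stmt0Aux

/-- every probability distribution agrees, on any finite set Γ of
formulas, with the probabilities induced by some finite probabilistic model. -/
theorem stmt0 (Γ : Finset Fml) (P : ProbDist) :
    ∃ (k : ℕ) (_ : 0 < k) (val : Fin k → ℕ → Bool) (μ : Fin k → ℝ),
      (∀ i, 0 ≤ μ i) ∧ (∑ i, μ i) = 1 ∧
      ∀ γ ∈ Γ, (∑ i, if γ.eval (val i) = true then μ i else 0) = P.p γ := by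
  classical
  set N := Γ.sup Stmt0Aux.maxAtom with hN
  let e : (Fin N → Bool) ≃ Fin (2 ^ N) :=
    (Equiv.arrowCongr (Equiv.refl (Fin N)) finTwoEquiv.symm).trans finFunctionFinEquiv
  refine ⟨2 ^ N, (by positivity),
    fun i => Stmt0Aux.vext N (e.symm i),
    fun i => P.p (Stmt0Aux.state N (e.symm i)), fun i => P.nonneg _, ?_, ?_⟩
  · have hsum : (∑ i : Fin (2 ^ N), P.p (Stmt0Aux.state N (e.symm i)))
        = ∑ w : Fin N → Bool, P.p (Stmt0Aux.state N w) :=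
      Equiv.sum_comp e.symm (fun w => P.p (Stmt0Aux.state N w))
    rw [hsum, ← Stmt0Aux.P_stF N P Finset.univ]
    apply Stmt0Aux.P_taut
    intro v
    rw [Stmt0Aux.eval_stF]
    exact Finset.mem_univ _
  · intro γ hγ
    have hsum : (∑ i : Fin (2 ^ N),
          if γ.eval (Stmt0Aux.vext N (e.symm i)) = true
            then P.p (Stmt0Aux.state N (e.symm i)) else 0)
        = ∑ w : Fin N → Bool,
          if γ.eval (Stmt0Aux.vext N w) = true then P.p (Stmt0Aux.state N w) else 0 :=
      Equiv.sum_comp e.symm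
        (fun w => if γ.eval (Stmt0Aux.vext N w) = true then P.p (Stmt0Aux.state N w) else 0)
    rw [hsum, ← Finset.sum_filter, ← Stmt0Aux.P_stF N P]
    apply Stmt0Aux.P_congr
    intro v
    have hag : ∀ n < Stmt0Aux.maxAtom γ, v n = Stmt0Aux.vext N (Stmt0Aux.restr N v) n := by
      intro n hn
      have hnN : n < N := lt_of_lt_of_le hn (Finset.le_sup hγ)
      simp [Stmt0Aux.vext, hnN, Stmt0Aux.restr]
    rw [Bool.eq_iff_iff, Stmt0Aux.eval_stF, Finset.mem_filter]
    constructor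
    · rintro ⟨_, h⟩
      rw [Stmt0Aux.eval_eq_of_agree γ v _ hag]
      exact h
    · intro h
      refine ⟨Finset.mem_univ _, ?_⟩
      rw [← Stmt0Aux.eval_eq_of_agree γ v _ hag]
      exact h
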